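/- Let λ be a σ-finite measure on (S, B) and σ a strategy dominated by λ with densities f_n, and let g_n(x) = f_0(x_1) f_1(x_2 | x_1) ··· f_{n−1}(x_n | x_1, ..., x_{n−1}). Then P_σ is stationary if and only if, for every n ≥ 1, g_n(x) = ∫_S g_{n+1}(u, x) λ(du) for P_σ∘(X_1, ..., X_n)^{−1}-almost all x ∈ S^n, where (u, x) = (u, x_1, ..., x_n). -/

import Mathlib

open MeasureTheory ProbabilityTheory
open scoped ENNReal

namespace PredictiveBayes

variable {S : Type*} [MeasurableSpace S]

/-- The finite-dimensional distributions determined by a strategy `κ`. -/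
noncomputable def stratFDD (κ : ∀ n, Kernel (Fin n → S) S) : ∀ n, Measure (Fin n → S)
  | 0 => Measure.dirac (fun i : Fin 0 => i.elim0)
  | n + 1 => (stratFDD κ n).bind (fun x => ((κ n) x).map (Fin.snoc x))

/-- `P` is the Ionescu–Tulcea law `P_κ` of the strategy `κ`. -/
def IsStrategyLaw (κ : ∀ n, Kernel (Fin n → S) S) (P : Measure (ℕ → S)) : Prop :=
  ∀ n, P.map (fun ω (i : Fin n) => ω i) = stratFDD κ n

/-- The process `Y` is stationary under `P`. -/
def Stationary {Ω : Type*} [MeasurableSpace Ω] (P : Measure Ω) (Y : ℕ → Ω → S) : Prop :=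
  ∀ n : ℕ, P.map (fun ω (i : Fin n) => Y ((i : ℕ) + 1) ω)
    = P.map (fun ω (i : Fin n) => Y i ω)

/-- Given predictive densities `f`, `jointDensity f n` is the function
`g_n(x) = f_0(x_1) f_1(x_2 | x_1) ⋯ f_{n-1}(x_n | x_1, …, x_{n-1})`. -/
noncomputable def jointDensity (f : ∀ n, (Fin n → S) → S → ℝ≥0∞) : ∀ n, (Fin n → S) → ℝ≥0∞
  | 0 => fun _ => 1
  | n + 1 => fun x => jointDensity f n (Fin.init x) * f n (Fin.init x) (x (Fin.last n))

lemma measurable_snoc_pair (n : ℕ) :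
    Measurable (fun p : (Fin n → S) × S => (Fin.snoc p.1 p.2 : Fin (n+1) → S)) := by
  apply measurable_pi_lambda
  intro i
  induction i using Fin.lastCases with
  | last => simpa using measurable_snd
  | cast j => simpa [Fin.snoc_castSucc, Function.comp_def] using (measurable_pi_apply j).comp measurable_fst

lemma measurable_cons_pair (n : ℕ) :
    Measurable (fun p : S × (Fin n → S) => (Fin.cons p.1 p.2 : Fin (n+1) → S)) := by
  apply measurable_pi_lambda
  intro i
  induction i using Fin.cases with
  | zero => simpa using measurable_fst
  | succ j => simpa [Fin.cons_succ, Function.comp_def] using (measurable_pi_apply j).comp measurable_snd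

lemma measurable_init' (n : ℕ) :
    Measurable (fun x : Fin (n+1) → S => Fin.init x) :=
  measurable_pi_lambda _ fun j => measurable_pi_apply _

lemma measurable_jointDensity (f : ∀ n, (Fin n → S) → S → ℝ≥0∞)
    (hf : ∀ n, Measurable (fun p : (Fin n → S) × S => f n p.1 p.2)) :
    ∀ n, Measurable (jointDensity f n) := by
  intro n
  induction n with
  | zero => exact measurable_const
  | succ n ih =>
    exact (ih.comp (measurable_init' n)).mul
      ((hf n).comp ((measurable_init' n).prodMk (measurable_pi_apply (Fin.last n))))

lemma measurable_bindKernel (κ : ∀ n, Kernel (Fin n → S) S) [∀ n, IsMarkovKernel (κ n)]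
    (n : ℕ) : Measurable (fun x : Fin n → S => (((κ n) x).map (Fin.snoc x) : Measure (Fin (n+1) → S))) := by
  rw [Measure.measurable_measure]
  intro s hs
  have hx : ∀ x : Fin n → S, Measurable (fun y : S => (Fin.snoc x y : Fin (n+1) → S)) :=
    fun x => (measurable_snoc_pair n).comp (measurable_const.prodMk measurable_id)
  simp_rw [Measure.map_apply (hx _) hs]
  have heq : ∀ x : Fin n → S, (fun y : S => (Fin.snoc x y : Fin (n+1) → S)) ⁻¹' s
      = Prod.mk x ⁻¹' ((fun p : (Fin n → S) × S => (Fin.snoc p.1 p.2 : Fin (n+1) → S)) ⁻¹' s) :=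
    fun x => rfl
  simp_rw [heq]
  exact Kernel.measurable_kernel_prodMk_left (measurable_snoc_pair n hs)

lemma stratFDD_eq (lam : Measure S) [SigmaFinite lam]
    (f : ∀ n, (Fin n → S) → S → ℝ≥0∞)
    (hf : ∀ n, Measurable (fun p : (Fin n → S) × S => f n p.1 p.2))
    (κ : ∀ n, Kernel (Fin n → S) S) [∀ n, IsMarkovKernel (κ n)]
    (hκ : ∀ n (x : Fin n → S), κ n x = lam.withDensity (f n x)) :
    ∀ n, stratFDD κ n
      = (Measure.pi (fun _ : Fin n => lam)).withDensity (jointDensity f n) := by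
  intro n
  induction n with
  | zero =>
    have h1 : (Measure.pi (fun _ : Fin 0 => lam)).withDensity (jointDensity f 0)
        = Measure.pi (fun _ : Fin 0 => lam) := by
      have : jointDensity f 0 = (1 : (Fin 0 → S) → ℝ≥0∞) := rfl
      rw [this, withDensity_one]
    rw [h1, Measure.pi_of_empty]
    rfl
  | succ n ih =>
    have hg := measurable_jointDensity f hf n
    have hg1 := measurable_jointDensity f hf (n+1)
    have hK := measurable_bindKernel κ n
    have hx : ∀ x : Fin n → S, Measurable (fun y : S => (Fin.snoc x y : Fin (n+1) → S)) :=
      fun x => (measurable_snoc_pair n).comp (measurable_const.prodMk measurable_id)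
    ext s hs
    set F : (Fin n → S) × S → ℝ≥0∞ :=
      fun p => s.indicator (jointDensity f (n+1)) (Fin.snoc p.1 p.2) with hF
    have hFmeas : Measurable F := (hg1.indicator hs).comp (measurable_snoc_pair n)
    have hFval : ∀ (x : Fin n → S) (y : S),
        F (x, y) = jointDensity f n x * ((fun y : S => (Fin.snoc x y : Fin (n+1) → S)) ⁻¹' s).indicator
          (f n x) y := by
      intro x y
      by_cases h : (Fin.snoc x y : Fin (n+1) → S) ∈ s <;>
        simp [hF, Set.indicator_apply, h, jointDensity, Fin.init_snoc, Fin.snoc_last]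
    -- LHS
    have hLHS : stratFDD κ (n+1) s = ∫⁻ x, ∫⁻ y, F (x, y) ∂lam ∂(Measure.pi (fun _ : Fin n => lam)) := by
      show ((stratFDD κ n).bind (fun x => ((κ n) x).map (Fin.snoc x))) s = _
      have hcoe : Measurable (fun x : Fin n → S =>
          (((κ n) x).map (Fin.snoc x) : Measure (Fin (n+1) → S)) s) :=
        (Measure.measurable_coe hs).comp hK
      rw [Measure.bind_apply hs hK.aemeasurable, ih,
        lintegral_withDensity_eq_lintegral_mul _ hg hcoe]
      congr 1
      ext x
      have h1 : ((κ n) x).map (Fin.snoc x) s = ∫⁻ y, ((fun y : S => (Fin.snoc x y : Fin (n+1) → S)) ⁻¹' s).indicator (f n x) y ∂lam := by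
        rw [Measure.map_apply (hx x) hs, hκ n x, withDensity_apply _ ((hx x) hs),
          ← lintegral_indicator ((hx x) hs) _]
      have hfnx : Measurable (f n x) := (hf n).comp (measurable_const.prodMk measurable_id)
      simp only [Pi.mul_apply, h1]
      rw [← lintegral_const_mul _ (hfnx.indicator ((hx x) hs))]
      exact lintegral_congr fun y => (hFval x y).symm
    -- RHS
    have e := MeasurableEquiv.piFinSuccAbove (fun _ : Fin (n+1) => S) (Fin.last n)
    have hmp : MeasurePreserving
        (MeasurableEquiv.piFinSuccAbove (fun _ : Fin (n+1) => S) (Fin.last n)).symm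
        (lam.prod (Measure.pi (fun _ : Fin n => lam)))
        (Measure.pi (fun _ : Fin (n+1) => lam)) :=
      (measurePreserving_piFinSuccAbove (fun _ : Fin (n+1) => lam) (Fin.last n)).symm _
    have hsymm : ∀ (p : S × (Fin n → S)),
        (MeasurableEquiv.piFinSuccAbove (fun _ : Fin (n+1) => S) (Fin.last n)).symm p
          = Fin.snoc p.2 p.1 := by
      intro p
      have : (MeasurableEquiv.piFinSuccAbove (fun _ : Fin (n+1) => S) (Fin.last n)).symm p
          = Fin.insertNth (Fin.last n) p.1 p.2 := rfl
      rw [this, Fin.insertNth_last']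
    have hRHS : ((Measure.pi (fun _ : Fin (n+1) => lam)).withDensity (jointDensity f (n+1))) s
        = ∫⁻ x, ∫⁻ y, F (x, y) ∂lam ∂(Measure.pi (fun _ : Fin n => lam)) := by
      rw [withDensity_apply _ hs, ← lintegral_indicator hs _, ← hmp.lintegral_comp (hg1.indicator hs)]
      have : ∀ p : S × (Fin n → S),
          s.indicator (jointDensity f (n+1))
            ((MeasurableEquiv.piFinSuccAbove (fun _ : Fin (n+1) => S) (Fin.last n)).symm p)
            = F (p.2, p.1) := by
        intro p; rw [hsymm p]
      have hswap : AEMeasurable (fun z : S × (Fin n → S) => F (z.2, z.1))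
          (lam.prod (Measure.pi fun _ : Fin n => lam)) :=
        (hFmeas.comp measurable_swap).aemeasurable
      rw [lintegral_congr this, lintegral_prod _ hswap]
      exact (lintegral_lintegral_swap hFmeas.aemeasurable).symm
    rw [hLHS, hRHS]


lemma map_tail_withDensity (lam : Measure S) [SigmaFinite lam] (n : ℕ)
    (g1 : (Fin (n+1) → S) → ℝ≥0∞) (hg1 : Measurable g1) :
    ((Measure.pi (fun _ : Fin (n+1) => lam)).withDensity g1).map
        (fun x (i : Fin n) => x i.succ)
      = (Measure.pi (fun _ : Fin n => lam)).withDensity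
        (fun x => ∫⁻ u, g1 (Fin.cons u x) ∂lam) := by
  have htail : Measurable (fun x : Fin (n+1) → S => (fun i : Fin n => x i.succ)) :=
    measurable_pi_lambda _ fun i => measurable_pi_apply _
  have hmp : MeasurePreserving
      (MeasurableEquiv.piFinSuccAbove (fun _ : Fin (n+1) => S) 0).symm
      (lam.prod (Measure.pi (fun _ : Fin n => lam)))
      (Measure.pi (fun _ : Fin (n+1) => lam)) :=
    (measurePreserving_piFinSuccAbove (fun _ : Fin (n+1) => lam) 0).symm _
  have hsymm : ∀ p : S × (Fin n → S),
      (MeasurableEquiv.piFinSuccAbove (fun _ : Fin (n+1) => S) 0).symm p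
        = Fin.cons p.1 p.2 := by
    intro p
    have : (MeasurableEquiv.piFinSuccAbove (fun _ : Fin (n+1) => S) 0).symm p
        = Fin.insertNth 0 p.1 p.2 := rfl
    rw [this, Fin.insertNth_zero']
  ext s hs
  have hpre : MeasurableSet ((fun x : Fin (n+1) → S => (fun i : Fin n => x i.succ)) ⁻¹' s) :=
    htail hs
  set G : S × (Fin n → S) → ℝ≥0∞ :=
    fun p => ((fun x : Fin (n+1) → S => (fun i : Fin n => x i.succ)) ⁻¹' s).indicator g1
      (Fin.cons p.1 p.2) with hG
  have hGmeas : Measurable G := (hg1.indicator hpre).comp (measurable_cons_pair n)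
  have htc : ∀ (u : S) (x : Fin n → S),
      (fun i : Fin n => (Fin.cons u x : Fin (n+1) → S) i.succ) = x := by
    intro u x; funext i; exact Fin.cons_succ (α := fun _ : Fin (n+1) => S) u x i
  have hLHS : (((Measure.pi (fun _ : Fin (n+1) => lam)).withDensity g1).map
      (fun x (i : Fin n) => x i.succ)) s = ∫⁻ u, ∫⁻ x, G (u, x)
        ∂(Measure.pi (fun _ : Fin n => lam)) ∂lam := by
    rw [Measure.map_apply htail hs, withDensity_apply _ hpre, ← lintegral_indicator hpre _,
      ← hmp.lintegral_comp (hg1.indicator hpre)]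
    have : ∀ p : S × (Fin n → S),
        ((fun x : Fin (n+1) → S => (fun i : Fin n => x i.succ)) ⁻¹' s).indicator g1
          ((MeasurableEquiv.piFinSuccAbove (fun _ : Fin (n+1) => S) 0).symm p) = G p := by
      intro p; rw [hG]; rw [hsymm p]
    rw [lintegral_congr this, lintegral_prod _ hGmeas.aemeasurable]
  rw [hLHS, withDensity_apply _ hs, ← lintegral_indicator hs _]
  have hswap : ∫⁻ u, ∫⁻ x, G (u, x) ∂(Measure.pi (fun _ : Fin n => lam)) ∂lam
      = ∫⁻ x, ∫⁻ u, G (u, x) ∂lam ∂(Measure.pi (fun _ : Fin n => lam)) :=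
    lintegral_lintegral_swap hGmeas.aemeasurable
  rw [hswap]
  refine lintegral_congr fun x => ?_
  by_cases hx : x ∈ s
  · have hmem : ∀ u : S, (Fin.cons u x : Fin (n+1) → S)
        ∈ ((fun x : Fin (n+1) → S => (fun i : Fin n => x i.succ)) ⁻¹' s) := by
      intro u; show (fun i : Fin n => (Fin.cons u x : Fin (n+1) → S) i.succ) ∈ s
      rw [htc u x]; exact hx
    have h1 : ∀ u : S, G (u, x) = g1 (Fin.cons u x) := by
      intro u; rw [hG]; exact Set.indicator_of_mem (hmem u) g1
    rw [lintegral_congr h1, Set.indicator_of_mem hx]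
  · have hmem : ∀ u : S, (Fin.cons u x : Fin (n+1) → S)
        ∉ ((fun x : Fin (n+1) → S => (fun i : Fin n => x i.succ)) ⁻¹' s) := by
      intro u hmem
      apply hx
      have := hmem
      rwa [Set.mem_preimage, htc u x] at this
    have h1 : ∀ u : S, G (u, x) = 0 := by
      intro u; rw [hG]; exact Set.indicator_of_notMem (hmem u) g1
    rw [lintegral_congr h1, Set.indicator_of_notMem hx, lintegral_zero]

lemma measure_eq_of_le_of_univ_le {α : Type*} [MeasurableSpace α] {μ ν : Measure α}
    [IsFiniteMeasure ν] (h : ∀ s, MeasurableSet s → μ s ≤ ν s)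
    (h2 : ν Set.univ ≤ μ Set.univ) : μ = ν := by
  ext s hs
  refine le_antisymm (h s hs) ?_
  have h3 : ν s + ν sᶜ ≤ μ s + ν sᶜ := by
    calc ν s + ν sᶜ = ν Set.univ := measure_add_measure_compl hs
      _ ≤ μ Set.univ := h2
      _ = μ s + μ sᶜ := (measure_add_measure_compl hs).symm
      _ ≤ μ s + ν sᶜ := add_le_add le_rfl (h sᶜ hs.compl)
  exact (ENNReal.add_le_add_iff_right (measure_ne_top ν sᶜ)).mp h3


/-- **Theorem (stationarity for dominated strategies).** Let `λ` be a σ-finite measure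
and `κ` a strategy dominated by `λ`, with predictive densities `f_n(· | x)` and joint
densities `g_n`. Then `P_κ` is stationary if and only if, for every `n ≥ 1`,
`g_n(x) = ∫ g_{n+1}(u, x) λ(du)` for `P_κ ∘ (X_1, …, X_n)⁻¹`-almost all `x ∈ Sⁿ`. -/
theorem dominated_stationary_iff {S : Type*} [MeasurableSpace S] [StandardBorelSpace S]
    [Nonempty S]
    (lam : Measure S) [SigmaFinite lam]
    (f : ∀ n, (Fin n → S) → S → ℝ≥0∞)
    (hf : ∀ n, Measurable (fun p : (Fin n → S) × S => f n p.1 p.2))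
    (κ : ∀ n, Kernel (Fin n → S) S) [∀ n, IsMarkovKernel (κ n)]
    (hκ : ∀ n (x : Fin n → S), κ n x = lam.withDensity (f n x))
    (P : Measure (ℕ → S)) [IsProbabilityMeasure P] (hP : IsStrategyLaw κ P) :
    Stationary P (fun n ω => ω n) ↔
      ∀ n : ℕ, 1 ≤ n →
        ∀ᵐ x ∂(P.map (fun ω (i : Fin n) => ω i)),
          jointDensity f n x = ∫⁻ u, jointDensity f (n + 1) (Fin.cons u x) ∂lam := by
  classical
  have hg : ∀ n, Measurable (jointDensity f n) := measurable_jointDensity f hf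
  have hFDD : ∀ n, stratFDD κ n
      = (Measure.pi (fun _ : Fin n => lam)).withDensity (jointDensity f n) :=
    stratFDD_eq lam f hf κ hκ
  have hrestrict : ∀ n, Measurable (fun ω : ℕ → S => (fun i : Fin n => ω i)) :=
    fun n => measurable_pi_lambda _ fun i => measurable_pi_apply _
  have htail : ∀ n, Measurable (fun x : Fin (n+1) → S => (fun i : Fin n => x i.succ)) :=
    fun n => measurable_pi_lambda _ fun i => measurable_pi_apply _
  have hshiftmeas : ∀ n, Measurable (fun ω : ℕ → S => (fun i : Fin n => ω ((i : ℕ) + 1))) :=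
    fun n => measurable_pi_lambda _ fun i => measurable_pi_apply _
  have hprob : ∀ n, IsProbabilityMeasure (stratFDD κ n) := fun n =>
    (hP n) ▸ Measure.isProbabilityMeasure_map (hrestrict n).aemeasurable
  have hh : ∀ n, Measurable (fun x : Fin n → S =>
      ∫⁻ u, jointDensity f (n+1) (Fin.cons u x) ∂lam) := by
    intro n
    have hunc : Measurable (fun q : (Fin n → S) × S => jointDensity f (n+1) (Fin.cons q.2 q.1)) :=
      (hg (n+1)).comp ((measurable_cons_pair n).comp (measurable_snd.prodMk measurable_fst))
    exact Measurable.lintegral_prod_right (f := fun x u => jointDensity f (n+1) (Fin.cons u x)) hunc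
  have hshift : ∀ n, P.map (fun ω (i : Fin n) => ω ((i : ℕ) + 1))
      = (Measure.pi (fun _ : Fin n => lam)).withDensity
        (fun x => ∫⁻ u, jointDensity f (n+1) (Fin.cons u x) ∂lam) := by
    intro n
    have h1 : (fun ω (i : Fin n) => ω ((i : ℕ) + 1))
        = (fun x : Fin (n+1) → S => (fun i : Fin n => x i.succ))
          ∘ (fun ω : ℕ → S => (fun i : Fin (n+1) => ω i)) := rfl
    rw [h1, ← Measure.map_map (htail n) (hrestrict (n+1)), hP (n+1), hFDD (n+1),
      map_tail_withDensity lam n _ (hg (n+1))]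
  have hkey : ∀ n, (P.map (fun ω (i : Fin n) => ω ((i : ℕ) + 1))
        = P.map (fun ω (i : Fin n) => ω i))
      ↔ (∀ᵐ x ∂(stratFDD κ n), jointDensity f n x
          = ∫⁻ u, jointDensity f (n+1) (Fin.cons u x) ∂lam) := by
    intro n
    constructor
    · intro hst
      rw [hshift n, hP n, hFDD n] at hst
      have hae := (withDensity_eq_iff_of_sigmaFinite (hh n).aemeasurable (hg n).aemeasurable).mp hst
      rw [hFDD n]
      exact (withDensity_absolutelyContinuous _ _).ae_eq hae.symm
    · intro hae
      rw [hFDD n] at hae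
      rw [hshift n, hP n, hFDD n]
      have ht : MeasurableSet {x : Fin n → S | jointDensity f n x
          = ∫⁻ u, jointDensity f (n+1) (Fin.cons u x) ∂lam} := by
        have : {x : Fin n → S | jointDensity f n x
            = ∫⁻ u, jointDensity f (n+1) (Fin.cons u x) ∂lam}
            = {x | jointDensity f n x ≤ ∫⁻ u, jointDensity f (n+1) (Fin.cons u x) ∂lam}
              ∩ {x | (∫⁻ u, jointDensity f (n+1) (Fin.cons u x) ∂lam) ≤ jointDensity f n x} := by
          ext x; simp [le_antisymm_iff]
        rw [this]
        exact (measurableSet_le (hg n) (hh n)).inter (measurableSet_le (hh n) (hg n))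
      have hnull : ((Measure.pi (fun _ : Fin n => lam)).withDensity (jointDensity f n))
          {x : Fin n → S | jointDensity f n x
            = ∫⁻ u, jointDensity f (n+1) (Fin.cons u x) ∂lam}ᶜ = 0 := by
        rw [Set.compl_setOf]
        exact ae_iff.mp hae
      have hprobg : IsProbabilityMeasure
          ((Measure.pi (fun _ : Fin n => lam)).withDensity (jointDensity f n)) :=
        (hFDD n) ▸ hprob n
      have hprobh : IsProbabilityMeasure
          ((Measure.pi (fun _ : Fin n => lam)).withDensity
            (fun x => ∫⁻ u, jointDensity f (n+1) (Fin.cons u x) ∂lam)) := by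
        rw [← hshift n]
        exact Measure.isProbabilityMeasure_map (hshiftmeas n).aemeasurable
      have hle : ∀ s, MeasurableSet s →
          ((Measure.pi (fun _ : Fin n => lam)).withDensity (jointDensity f n)) s
            ≤ ((Measure.pi (fun _ : Fin n => lam)).withDensity
              (fun x => ∫⁻ u, jointDensity f (n+1) (Fin.cons u x) ∂lam)) s := by
        intro s hs
        set t := {x : Fin n → S | jointDensity f n x
          = ∫⁻ u, jointDensity f (n+1) (Fin.cons u x) ∂lam}
        rw [withDensity_apply _ hs, withDensity_apply _ hs]
        have hsub : s ⊆ (s ∩ t) ∪ tᶜ := by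
          intro x hx
          by_cases hxt : x ∈ t
          · exact Or.inl ⟨hx, hxt⟩
          · exact Or.inr hxt
        calc ∫⁻ x in s, jointDensity f n x ∂(Measure.pi (fun _ : Fin n => lam))
            ≤ ∫⁻ x in (s ∩ t) ∪ tᶜ, jointDensity f n x ∂(Measure.pi (fun _ : Fin n => lam)) :=
              lintegral_mono_set hsub
          _ ≤ (∫⁻ x in s ∩ t, jointDensity f n x ∂(Measure.pi (fun _ : Fin n => lam)))
              + ∫⁻ x in tᶜ, jointDensity f n x ∂(Measure.pi (fun _ : Fin n => lam)) :=
              lintegral_union_le _ _ _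
          _ = ∫⁻ x in s ∩ t, jointDensity f n x ∂(Measure.pi (fun _ : Fin n => lam)) := by
              have : (∫⁻ x in tᶜ, jointDensity f n x ∂(Measure.pi (fun _ : Fin n => lam))) = 0 := by
                rw [← withDensity_apply _ ht.compl]
                exact hnull
              rw [this, add_zero]
          _ = ∫⁻ x in s ∩ t, (∫⁻ u, jointDensity f (n+1) (Fin.cons u x) ∂lam)
                ∂(Measure.pi (fun _ : Fin n => lam)) := by
              refine setLIntegral_congr_fun (hs.inter ht) (fun x hx => hx.2)
          _ ≤ ∫⁻ x in s, (∫⁻ u, jointDensity f (n+1) (Fin.cons u x) ∂lam)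
                ∂(Measure.pi (fun _ : Fin n => lam)) :=
              lintegral_mono_set Set.inter_subset_left
      have huniv : ((Measure.pi (fun _ : Fin n => lam)).withDensity
            (fun x => ∫⁻ u, jointDensity f (n+1) (Fin.cons u x) ∂lam)) Set.univ
          ≤ ((Measure.pi (fun _ : Fin n => lam)).withDensity (jointDensity f n)) Set.univ := by
        rw [measure_univ, measure_univ]
      exact (measure_eq_of_le_of_univ_le hle huniv).symm
  have hzero : ∀ x : Fin 0 → S, (∫⁻ u, jointDensity f 1 (Fin.cons u x) ∂lam) = 1 := by
    intro x
    have h1 : ∀ u : S, jointDensity f 1 (Fin.cons u x) = f 0 x u := by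
      intro u
      have hinit : Fin.init (Fin.cons u x : Fin 1 → S) = x := funext fun i => i.elim0
      have hlast : (Fin.cons u x : Fin 1 → S) (Fin.last 0) = u := rfl
      show jointDensity f 0 (Fin.init (Fin.cons u x : Fin 1 → S))
          * f 0 (Fin.init (Fin.cons u x : Fin 1 → S))
            ((Fin.cons u x : Fin 1 → S) (Fin.last 0)) = f 0 x u
      rw [hinit, hlast]
      show 1 * f 0 x u = f 0 x u
      rw [one_mul]
    calc (∫⁻ u, jointDensity f 1 (Fin.cons u x) ∂lam) = ∫⁻ u, f 0 x u ∂lam :=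
        lintegral_congr h1
      _ = (lam.withDensity (f 0 x)) Set.univ := by
          rw [withDensity_apply _ MeasurableSet.univ, setLIntegral_univ]
      _ = ((κ 0) x) Set.univ := by rw [hκ 0 x]
      _ = 1 := measure_univ
  constructor
  · intro hst n _
    have h1 := (hkey n).mp (hst n)
    rw [hP n]
    exact h1
  · intro hcond n
    match n with
    | 0 => exact (hkey 0).mpr (ae_of_all _ fun x => (hzero x).symm)
    | (n+1) =>
      have h1 := hcond (n+1) (by omega)
      rw [hP (n+1)] at h1
      exact (hkey (n+1)).mpr h1

end PredictiveBayes
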